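/- Every tree that is bipartite with parts X and Y satisfies 1 ≤ (1/(|X||Y|)) ∏_{v} deg(v), i.e., |X| · |Y| ≤ ∏_{v ∈ V} deg(v); equivalently, every tree is Ferrers-good. -/

import Mathlib

noncomputable section
open scoped Classical

def spanningTreeCount {V : Type*} (G : SimpleGraph V) : ℕ :=
  {H : G.Subgraph | H.IsSpanning ∧ H.coe.IsTree}.ncard

def sdeg {V : Type*} (G : SimpleGraph V) (v : V) : ℕ := (G.neighborSet v).ncard

def IsBipartitionOn {V : Type*} (G : SimpleGraph V) (X Y : Set V) : Prop :=
  Disjoint X Y ∧ X ∪ Y = Set.univ ∧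
    ∀ u v, G.Adj u v → (u ∈ X ∧ v ∈ Y) ∨ (u ∈ Y ∧ v ∈ X)

def FerrersGood {V : Type*} [Fintype V] (G : SimpleGraph V) (X Y : Set V) : Prop :=
  (spanningTreeCount G : ℚ) ≤
    (∏ v : V, (sdeg G v : ℚ)) / ((X.ncard : ℚ) * (Y.ncard : ℚ))

/-- Product of positive naturals is at least sum minus count plus one. -/
lemma prod_ge_sum_aux {α : Type*} (s : Finset α) (f : α → ℕ)
    (hf : ∀ i ∈ s, 1 ≤ f i) :
    (∑ i ∈ s, f i) + 1 ≤ (∏ i ∈ s, f i) + s.card := by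
  classical
  induction s using Finset.induction_on with
  | empty => simp
  | @insert a s ha ih =>
    have h1 : 1 ≤ f a := hf a (Finset.mem_insert_self a s)
    have h2 : ∀ i ∈ s, 1 ≤ f i := fun i hi => hf i (Finset.mem_insert_of_mem hi)
    have ihs := ih h2
    rw [Finset.sum_insert ha, Finset.prod_insert ha, Finset.card_insert_of_notMem ha]
    have hprod : 1 ≤ ∏ i ∈ s, f i := Finset.one_le_prod' h2
    nlinarith [Nat.one_le_iff_ne_zero.mp hprod]

/-- Sum of degrees over one side of a bipartition equals number of edges. -/
lemma sum_deg_part {V : Type*} [Fintype V] (G : SimpleGraph V)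
    (X Y : Set V) (hbip : IsBipartitionOn G X Y) :
    ∑ v ∈ X.toFinset, G.degree v = G.edgeFinset.card := by
  classical
  obtain ⟨hdisj, hunion, hadj⟩ := hbip
  have hbiU : G.edgeFinset = X.toFinset.biUnion (fun v => G.incidenceFinset v) := by
    ext e
    simp only [Finset.mem_biUnion, SimpleGraph.mem_incidenceFinset, Set.mem_toFinset,
      SimpleGraph.mem_edgeFinset]
    constructor
    · intro he
      induction e with
      | h u w =>
        have huw : G.Adj u w := G.mem_edgeSet.mp he
        rcases hadj u w huw with ⟨hu, _⟩ | ⟨_, hw⟩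
        · exact ⟨u, hu, he, Sym2.mem_mk_left u w⟩
        · exact ⟨w, hw, he, Sym2.mem_mk_right u w⟩
    · rintro ⟨v, _, he, -⟩
      exact he
  have hdisj' : ∀ u ∈ X.toFinset, ∀ w ∈ X.toFinset, u ≠ w →
      Disjoint (G.incidenceFinset u) (G.incidenceFinset w) := by
    intro u hu w hw huw
    rw [Finset.disjoint_left]
    intro e heu hew
    rw [SimpleGraph.mem_incidenceFinset] at heu hew
    have : e = s(u, w) :=
      G.incidenceSet_inter_incidenceSet_subset huw ⟨heu, hew⟩
    subst this
    have : G.Adj u w := G.mem_edgeSet.mp heu.1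
    rcases hadj u w this with ⟨_, hY⟩ | ⟨hY, _⟩
    · exact (hdisj.ne_of_mem (Set.mem_toFinset.mp hw) hY) rfl
    · exact (hdisj.ne_of_mem (Set.mem_toFinset.mp hu) hY) rfl
  rw [hbiU, Finset.card_biUnion hdisj']
  exact Finset.sum_congr rfl fun v _ => (G.card_incidenceFinset_eq_degree v).symm

theorem stmt3 {V : Type*} [Fintype V] (G : SimpleGraph V) (hT : G.IsTree)
    (X Y : Set V) (hbip : IsBipartitionOn G X Y) :
    X.ncard * Y.ncard ≤ ∏ v : V, sdeg G v := by
  classical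
  obtain ⟨hdisj, hunion, hadj⟩ := hbip
  have hbip' : IsBipartitionOn G X Y := ⟨hdisj, hunion, hadj⟩
  have hbip'' : IsBipartitionOn G Y X := by
    refine ⟨hdisj.symm, by rw [Set.union_comm]; exact hunion, fun u v h => (hadj u v h).symm⟩
  -- sdeg is degree
  have hsdeg : ∀ v, sdeg G v = G.degree v := by
    intro v
    rw [sdeg, Set.ncard_eq_toFinset_card', Set.toFinset_card]
    exact G.card_neighborSet_eq_degree v
  -- trivial cases
  rcases Set.eq_empty_or_nonempty X with hX | hX
  · simp [hX]
  rcases Set.eq_empty_or_nonempty Y with hY | hY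
  · simp [hY]
  -- card V ≥ 2
  obtain ⟨x, hx⟩ := hX
  obtain ⟨y, hy⟩ := hY
  have hxy : x ≠ y := hdisj.ne_of_mem hx hy
  have hcard2 : 2 ≤ Fintype.card V := Fintype.one_lt_card_iff_nontrivial.mpr ⟨⟨x, y, hxy⟩⟩
  -- every degree positive
  have hdegpos : ∀ v : V, 1 ≤ G.degree v := by
    intro v
    rw [Nat.one_le_iff_ne_zero, ← Nat.pos_iff_ne_zero, SimpleGraph.degree_pos_iff_exists_adj]
    haveI : Nontrivial V := Fintype.one_lt_card_iff_nontrivial.mp hcard2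
    obtain ⟨w, hw⟩ := exists_ne v
    obtain ⟨p⟩ := hT.isConnected.preconnected v w
    cases p with
    | nil => exact absurd rfl hw.symm
    | cons h _ => exact ⟨_, h⟩
  -- edge count
  have hE : G.edgeFinset.card + 1 = Fintype.card V := hT.card_edgeFinset
  have hsumX : ∑ v ∈ X.toFinset, G.degree v = G.edgeFinset.card := sum_deg_part G X Y hbip'
  have hsumY : ∑ v ∈ Y.toFinset, G.degree v = G.edgeFinset.card := sum_deg_part G Y X hbip''
  -- card split
  have hXY : Disjoint X.toFinset Y.toFinset := by
    rw [Set.disjoint_toFinset]; exact hdisj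
  have hu : X.toFinset ∪ Y.toFinset = Finset.univ := by
    ext v
    simp only [Finset.mem_union, Set.mem_toFinset, Finset.mem_univ, iff_true]
    have hv : v ∈ X ∪ Y := by rw [hunion]; exact Set.mem_univ v
    exact hv
  have hcardsum : X.toFinset.card + Y.toFinset.card = Fintype.card V := by
    rw [← Finset.card_union_of_disjoint hXY, hu, Finset.card_univ]
  have hpX := prod_ge_sum_aux X.toFinset (fun v => G.degree v) (fun i _ => hdegpos i)
  have hpY := prod_ge_sum_aux Y.toFinset (fun v => G.degree v) (fun i _ => hdegpos i)
  rw [hsumX, hE] at hpX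
  rw [hsumY, hE] at hpY
  have hpX' : Fintype.card V ≤ (∏ i ∈ X.toFinset, G.degree i) + X.toFinset.card := hpX
  have hpY' : Fintype.card V ≤ (∏ i ∈ Y.toFinset, G.degree i) + Y.toFinset.card := hpY
  have h1 : Y.toFinset.card ≤ ∏ v ∈ X.toFinset, G.degree v := by
    clear hpX hpY; omega

  have h2 : X.toFinset.card ≤ ∏ v ∈ Y.toFinset, G.degree v := by
    clear hpX hpY; omega

  have hprod : ∏ v : V, sdeg G v =
      (∏ v ∈ X.toFinset, G.degree v) * (∏ v ∈ Y.toFinset, G.degree v) := by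
    simp only [hsdeg]
    rw [← hu, Finset.prod_union hXY]
  rw [hprod, Set.ncard_eq_toFinset_card' X, Set.ncard_eq_toFinset_card' Y]
  calc X.toFinset.card * Y.toFinset.card
      ≤ (∏ v ∈ Y.toFinset, G.degree v) * (∏ v ∈ X.toFinset, G.degree v) :=
        Nat.mul_le_mul h2 h1
    _ = _ := Nat.mul_comm _ _
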